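/- Let T be a meet-tree and α an automorphism of T (an order- and meet-preserving bijection). Then either α setwise fixes some branch (maximal chain) of T, or α is a fan: there exists a point γ with α(γ) = γ such that a ⊓ α(a) = γ for every a ≥ γ. -/

import Mathlib

section FanAux

variable {T : Type*} [SemilatticeInf T]

/-- Invariance transfers to the inverse automorphism. -/
private lemma fan_zpow_succ (α : T ≃o T) (m : ℤ) (x : T) :
    (α ^ (1 + m)) x = α ((α ^ m) x) := by
  rw [zpow_add, zpow_one]; rfl

private lemma fan_zpow_pred (α : T ≃o T) (m : ℤ) (x : T) :
    (α ^ (-1 + m)) x = α.symm ((α ^ m) x) := by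
  rw [zpow_add, zpow_neg_one]; rfl

private lemma fan_symm_inv (α : T ≃o T) {Γ : Set T} (hinv : α '' Γ = Γ) :
    α.symm '' Γ = Γ := by
  conv_lhs => rw [← hinv]
  ext x
  simp

private lemma fan_mem_inv (α : T ≃o T) {Γ : Set T} (hinv : α '' Γ = Γ) {x : T}
    (hx : x ∈ Γ) : α x ∈ Γ := by
  rw [← hinv]; exact ⟨x, hx, rfl⟩

private lemma fan_mem_inv_symm (α : T ≃o T) {Γ : Set T} (hinv : α '' Γ = Γ) {x : T}
    (hx : x ∈ Γ) : α.symm x ∈ Γ := by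
  rw [← fan_symm_inv α hinv]; exact ⟨x, hx, rfl⟩

private lemma fan_mem_zpow (α : T ≃o T) {Γ : Set T} (hinv : α '' Γ = Γ) {x : T}
    (hx : x ∈ Γ) : ∀ n : ℤ, (α ^ n) x ∈ Γ := by
  intro n
  induction n using Int.induction_on with
  | zero => simpa using hx
  | succ k ih =>
      rw [show ((k : ℤ) + 1) = 1 + k by ring, fan_zpow_succ]
      exact fan_mem_inv α hinv ih
  | pred k ih =>
      rw [show (-(k : ℤ) - 1) = -1 + -(k : ℤ) by ring, fan_zpow_pred]
      exact fan_mem_inv_symm α hinv ih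

/-- Upper bounds of an invariant set are sent to upper bounds. -/
private lemma fan_ub_apply (α : T ≃o T) {Γ : Set T} (hinv : α '' Γ = Γ) {u : T}
    (hu : ∀ g ∈ Γ, g ≤ u) : ∀ g ∈ Γ, g ≤ α u := by
  intro g hg
  rw [← hinv] at hg
  obtain ⟨g', hg', rfl⟩ := hg
  exact α.monotone (hu g' hg')

private lemma fan_ub_symm (α : T ≃o T) {Γ : Set T} (hinv : α '' Γ = Γ) {u : T}
    (hu : ∀ g ∈ Γ, g ≤ u) : ∀ g ∈ Γ, g ≤ α.symm u := by
  intro g hg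
  rw [← fan_symm_inv α hinv] at hg
  obtain ⟨g', hg', rfl⟩ := hg
  exact α.symm.monotone (hu g' hg')

private lemma fan_ub_zpow (α : T ≃o T) {Γ : Set T} (hinv : α '' Γ = Γ) {u : T}
    (hu : ∀ g ∈ Γ, g ≤ u) : ∀ n : ℤ, ∀ g ∈ Γ, g ≤ (α ^ n) u := by
  intro n
  induction n using Int.induction_on with
  | zero => simpa using hu
  | succ k ih =>
      have h : ∀ g ∈ Γ, g ≤ α ((α ^ (k : ℤ)) u) := fan_ub_apply α hinv ih
      rw [show ((k : ℤ) + 1) = 1 + k by ring]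
      intro g hg; rw [fan_zpow_succ]; exact h g hg
  | pred k ih =>
      have h : ∀ g ∈ Γ, g ≤ α.symm ((α ^ (-(k : ℤ))) u) := fan_ub_symm α hinv ih
      rw [show (-(k : ℤ) - 1) = -1 + -(k : ℤ) by ring]
      intro g hg; rw [fan_zpow_pred]; exact h g hg

/-- The orbit of a point is invariant as a set joined with an invariant set. -/
private lemma fan_orbit_inv (α : T ≃o T) (c : T) :
    α '' Set.range (fun n : ℤ => (α ^ n) c) = Set.range (fun n : ℤ => (α ^ n) c) := by
  ext x
  constructor
  · rintro ⟨y, ⟨n, rfl⟩, rfl⟩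
    exact ⟨1 + n, fan_zpow_succ α n c⟩
  · rintro ⟨n, rfl⟩
    refine ⟨(α ^ (n - 1)) c, ⟨n - 1, rfl⟩, ?_⟩
    rw [← fan_zpow_succ, show 1 + (n - 1) = n by ring]

/-- Key lemma A: if `Γ` is a maximal `α`-invariant chain, `c` is an upper bound of `Γ`
comparable with `α c`, then `c ∈ Γ`. -/
private lemma fan_lemA (α : T ≃o T) {Γ : Set T}
    (hch : IsChain (· ≤ ·) Γ) (hinv : α '' Γ = Γ)
    (hmax : ∀ S : Set T, (IsChain (· ≤ ·) S ∧ α '' S = S) → Γ ⊆ S → S = Γ)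
    {c : T} (hub : ∀ g ∈ Γ, g ≤ c) (hcomp : c ≤ α c ∨ α c ≤ c) : c ∈ Γ := by
  set g : ℤ → T := fun n => (α ^ n) c with hg
  have hmono : Monotone g ∨ Antitone g := by
    rcases hcomp with h | h
    · left
      apply monotone_int_of_le_succ
      intro n
      have : (α ^ (n + 1)) c = (α ^ n) (α c) := by rw [zpow_add, zpow_one]; rfl
      show (α ^ n) c ≤ (α ^ (n+1)) c
      rw [this]; exact (α ^ n).monotone h
    · right
      apply antitone_int_of_succ_le
      intro n
      have : (α ^ (n + 1)) c = (α ^ n) (α c) := by rw [zpow_add, zpow_one]; rfl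
      show (α ^ (n+1)) c ≤ (α ^ n) c
      rw [this]; exact (α ^ n).monotone h
  have horbchain : IsChain (· ≤ ·) (Set.range g) := by
    rintro x ⟨m, rfl⟩ y ⟨n, rfl⟩ _
    rcases le_total m n with h | h
    · rcases hmono with hm | hm
      · exact Or.inl (hm h)
      · exact Or.inr (hm h)
    · rcases hmono with hm | hm
      · exact Or.inr (hm h)
      · exact Or.inl (hm h)
  have hubs : ∀ n : ℤ, ∀ x ∈ Γ, x ≤ g n := fun n => fan_ub_zpow α hinv hub n
  set S : Set T := Γ ∪ Set.range g with hS
  have hSchain : IsChain (· ≤ ·) S := by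
    rintro x (hx | ⟨m, rfl⟩) y (hy | ⟨n, rfl⟩) hne
    · exact hch hx hy hne
    · exact Or.inl (hubs n x hx)
    · exact Or.inr (hubs m y hy)
    · exact horbchain ⟨m, rfl⟩ ⟨n, rfl⟩ hne
  have hSinv : α '' S = S := by
    rw [hS, Set.image_union, hinv, fan_orbit_inv]
  have := hmax S ⟨hSchain, hSinv⟩ Set.subset_union_left
  have hc : c ∈ S := Or.inr ⟨0, by simp [hg]⟩
  rwa [this] at hc

/-- Key lemma B (downward closedness): if `b` lies below some element of a maximal
invariant chain `Γ`, then `b ∈ Γ`. -/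
private lemma fan_lemB (hsl : ∀ a : T, IsChain (· ≤ ·) {x : T | x < a})
    (α : T ≃o T) {Γ : Set T}
    (hch : IsChain (· ≤ ·) Γ) (hinv : α '' Γ = Γ)
    (hmax : ∀ S : Set T, (IsChain (· ≤ ·) S ∧ α '' S = S) → Γ ⊆ S → S = Γ)
    {b g0 : T} (hg0 : g0 ∈ Γ) (hb : b < g0) : b ∈ Γ := by
  set g : ℤ → T := fun n => (α ^ n) b with hgdef
  have hlt : ∀ n : ℤ, g n < (α ^ n) g0 := fun n => (α ^ n).strictMono hb
  have hmem : ∀ n : ℤ, (α ^ n) g0 ∈ Γ := fan_mem_zpow α hinv hg0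
  -- comparability of an orbit element with anything in Γ
  have hcompΓ : ∀ n : ℤ, ∀ x ∈ Γ, g n ≤ x ∨ x ≤ g n := by
    intro n x hx
    rcases hch.total hx (hmem n) with h | h
    · rcases eq_or_lt_of_le h with rfl | h
      · exact Or.inl (hlt n).le
      · by_cases hxe : x = g n
        · exact Or.inl hxe.ge
        · rcases hsl ((α ^ n) g0) (hlt n) h (fun he => hxe he.symm) with h' | h'
          · exact Or.inl h'
          · exact Or.inr h'
    · exact Or.inl ((hlt n).le.trans h)
  have horbchain : IsChain (· ≤ ·) (Set.range g) := by
    rintro x ⟨m, rfl⟩ y ⟨n, rfl⟩ hne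
    rcases hch.total (hmem m) (hmem n) with h | h
    · have h1 : g m < (α ^ n) g0 := (hlt m).trans_le h
      exact hsl ((α ^ n) g0) h1 (hlt n) hne
    · have h1 : g n < (α ^ m) g0 := (hlt n).trans_le h
      rcases hsl ((α ^ m) g0) (hlt m) h1 hne with h' | h'
      · exact Or.inl h'
      · exact Or.inr h'
  set S : Set T := Γ ∪ Set.range g with hS
  have hSchain : IsChain (· ≤ ·) S := by
    rintro x (hx | ⟨m, rfl⟩) y (hy | ⟨n, rfl⟩) hne
    · exact hch hx hy hne
    · rcases hcompΓ n x hx with h | h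
      · exact Or.inr h
      · exact Or.inl h
    · exact hcompΓ m y hy
    · exact horbchain ⟨m, rfl⟩ ⟨n, rfl⟩ hne
  have hSinv : α '' S = S := by
    rw [hS, Set.image_union, hinv, fan_orbit_inv]
  have := hmax S ⟨hSchain, hSinv⟩ Set.subset_union_left
  have hc : b ∈ S := Or.inr ⟨0, by simp [hgdef]⟩
  rwa [this] at hc

/-- Key lemma C: if `a ∉ Γ` is an upper bound of a maximal invariant chain `Γ`,
then `a ⊓ α a` belongs to `Γ` and is an upper bound of `Γ`. -/
private lemma fan_lemC (hsl : ∀ a : T, IsChain (· ≤ ·) {x : T | x < a})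
    (α : T ≃o T) {Γ : Set T}
    (hch : IsChain (· ≤ ·) Γ) (hinv : α '' Γ = Γ)
    (hmax : ∀ S : Set T, (IsChain (· ≤ ·) S ∧ α '' S = S) → Γ ⊆ S → S = Γ)
    {a : T} (hub : ∀ g ∈ Γ, g ≤ a) (ha : a ∉ Γ) :
    a ⊓ α a ∈ Γ ∧ ∀ g ∈ Γ, g ≤ a ⊓ α a := by
  have hαub : ∀ g ∈ Γ, g ≤ α a := fan_ub_apply α hinv hub
  have hincomp : ¬ a ≤ α a ∧ ¬ α a ≤ a := by
    constructor
    · intro h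
      exact ha (fan_lemA α hch hinv hmax hub (Or.inl h))
    · intro h
      exact ha (fan_lemA α hch hinv hmax hub (Or.inr h))
  have hcub : ∀ g ∈ Γ, g ≤ a ⊓ α a := fun g hg => le_inf (hub g hg) (hαub g hg)
  have hca : a ⊓ α a < a := lt_of_le_of_ne inf_le_left (by
    intro h
    exact hincomp.1 ((le_of_eq h.symm).trans inf_le_right))
  have hcαa : a ⊓ α a < α a := lt_of_le_of_ne inf_le_right (by
    intro h
    exact hincomp.2 ((le_of_eq h.symm).trans inf_le_left))
  have hαc : α (a ⊓ α a) < α a := α.strictMono hca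
  have hcomp : a ⊓ α a ≤ α (a ⊓ α a) ∨ α (a ⊓ α a) ≤ a ⊓ α a := by
    by_cases he : a ⊓ α a = α (a ⊓ α a)
    · exact Or.inl he.le
    · exact hsl (α a) hcαa hαc he
  exact ⟨fan_lemA α hch hinv hmax hcub hcomp, hcub⟩

end FanAux

/-- Dichotomy for automorphisms of a meet-tree: every automorphism either
setwise fixes some branch (maximal chain), or is a fan: there is a fixed point
`γ` with `a ⊓ α a = γ` for every `a ≥ γ`. -/
theorem fix_branch_or_fan {T : Type*} [SemilatticeInf T]
    (hsl : ∀ a : T, IsChain (· ≤ ·) {x : T | x < a})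
    (α : T ≃o T) :
    (∃ Γ : Set T, IsMaxChain (· ≤ ·) Γ ∧ α '' Γ = Γ) ∨
    (∃ γ : T, α γ = γ ∧ ∀ a : T, γ ≤ a → a ⊓ α a = γ) := by
  -- Zorn's lemma for invariant chains
  obtain ⟨Γ, hΓmax⟩ :
      ∃ Γ, Maximal (· ∈ {S : Set T | IsChain (· ≤ ·) S ∧ α '' S = S}) Γ := by
    apply zorn_subset
    intro c hc hcchain
    refine ⟨⋃₀ c, ⟨?_, ?_⟩, fun s hs => Set.subset_sUnion_of_mem hs⟩
    · rintro x ⟨s, hs, hxs⟩ y ⟨t, ht, hyt⟩ hne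
      rcases hcchain.total hs ht with h | h
      · exact (hc ht).1 (h hxs) hyt hne
      · exact (hc hs).1 hxs (h hyt) hne
    · ext x
      simp only [Set.mem_image, Set.mem_sUnion]
      constructor
      · rintro ⟨y, ⟨s, hs, hys⟩, rfl⟩
        exact ⟨s, hs, (hc hs).2 ▸ ⟨y, hys, rfl⟩⟩
      · rintro ⟨s, hs, hxs⟩
        rw [← (hc hs).2] at hxs
        obtain ⟨y, hy, rfl⟩ := hxs
        exact ⟨y, ⟨s, hs, hy⟩, rfl⟩
  obtain ⟨hch, hinv⟩ := hΓmax.1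
  have hmax : ∀ S : Set T, (IsChain (· ≤ ·) S ∧ α '' S = S) → Γ ⊆ S → S = Γ :=
    fun S hS hsub => (hΓmax.2 hS hsub).antisymm hsub
  by_cases hMC : IsMaxChain (· ≤ ·) Γ
  · exact Or.inl ⟨Γ, hMC, hinv⟩
  · right
    -- Γ is not a maximal chain: some a outside Γ is comparable with all of Γ
    obtain ⟨s, hschain, hΓs, hsne⟩ : ∃ s, IsChain (· ≤ ·) s ∧ Γ ⊆ s ∧ s ≠ Γ := by
      by_contra h
      push_neg at h
      exact hMC ⟨hch, fun s hs hsub => (h s hs hsub).symm⟩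
    obtain ⟨a, has, haΓ⟩ : ∃ a, a ∈ s ∧ a ∉ Γ := by
      by_contra h
      push_neg at h
      exact hsne (Set.Subset.antisymm h hΓs)
    -- a is an upper bound of Γ
    have hub : ∀ g ∈ Γ, g ≤ a := by
      intro g hg
      rcases hschain.total has (hΓs hg) with h | h
      · rcases eq_or_lt_of_le h with rfl | h'
        · exact le_refl _
        · exact absurd (fan_lemB hsl α hch hinv hmax hg h') haΓ
      · exact h
    obtain ⟨hγΓ, hγub⟩ := fan_lemC hsl α hch hinv hmax hub haΓ
    set γ := a ⊓ α a with hγ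
    have hfix : α γ = γ := by
      have h1 : α γ ≤ γ := hγub _ (fan_mem_inv α hinv hγΓ)
      have h2 : γ ≤ α γ := by
        have := hγub _ (fan_mem_inv_symm α hinv hγΓ)
        calc γ = α (α.symm γ) := (α.apply_symm_apply γ).symm
          _ ≤ α γ := α.monotone this
      exact le_antisymm h1 h2
    refine ⟨γ, hfix, fun b hb => ?_⟩
    rcases eq_or_lt_of_le hb with rfl | hb'
    · rw [hfix, inf_idem]
    · have hbΓ : b ∉ Γ := fun h => absurd (hγub b h) (not_le_of_gt hb')
      have hbub : ∀ g ∈ Γ, g ≤ b := fun g hg => (hγub g hg).trans hb'.le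
      obtain ⟨hbin, hbub'⟩ := fan_lemC hsl α hch hinv hmax hbub hbΓ
      exact le_antisymm (hγub _ hbin) (hbub' γ hγΓ)
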